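/- Let G be a finite simple graph with n vertices and average degree d, with (d+1) | n, and let ES_m(G) be the expected greedy independent set size among m uniformly randomly chosen vertices. Define the conflict ratio r̄(m) = 1 − ES_m(G)/m. Then r̄(m) ≤ 1 − (n/(m(d+1))) · (1 − ∏_{i=1}^{m} (n − d − i)/(n + 1 − i)). -/

import Mathlib

open Finset Equiv


lemma card_fix (n : ℕ) (A : Finset (Fin n)) :
    (Finset.univ.filter (fun π : Equiv.Perm (Fin n) => ∀ a ∈ A, π a = a)).card
      = Nat.factorial (n - A.card) := by
  classical
  rw [← Fintype.card_subtype]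
  have e1 : {π : Equiv.Perm (Fin n) // ∀ a ∈ A, π a = a}
      ≃ {f : Equiv.Perm (Fin n) // ∀ a, ¬ (a ∉ A) → f a = a} :=
    Equiv.subtypeEquivRight (by intro f; constructor <;> intro h a ha <;> exact h a (by tauto))
  have e2 := (Equiv.Perm.subtypeEquivSubtypePerm (fun a : Fin n => a ∉ A))
  rw [Fintype.card_congr (e1.trans e2.symm), Fintype.card_perm, Fintype.card_subtype]
  congr 2
  rw [Finset.filter_not, Finset.filter_mem_eq_inter, Finset.univ_inter,
    Finset.card_sdiff_of_subset (Finset.subset_univ A), Finset.card_univ, Fintype.card_fin]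

lemma card_maps_into (n : ℕ) (A B : Finset (Fin n)) :
    (Finset.univ.filter (fun π : Equiv.Perm (Fin n) => ∀ a ∈ A, π a ∈ B)).card
      = (B.card).descFactorial A.card * Nat.factorial (n - A.card) := by
  classical
  set t : Finset ((↥A : Type) → Fin n) :=
    Finset.univ.filter (fun g => Function.Injective g ∧ ∀ a, g a ∈ B) with ht
  have H : ∀ π ∈ Finset.univ.filter (fun π : Equiv.Perm (Fin n) => ∀ a ∈ A, π a ∈ B),
      (fun a : ↥A => π ↑a) ∈ t := by
    intro π hπ
    simp only [ht, Finset.mem_filter, Finset.mem_univ, true_and] at hπ ⊢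
    exact ⟨fun a b hab => Subtype.ext (π.injective hab), fun a => hπ a a.2⟩
  rw [Finset.card_eq_sum_card_fiberwise H]
  have hfib : ∀ g ∈ t,
      ((Finset.univ.filter (fun π : Equiv.Perm (Fin n) => ∀ a ∈ A, π a ∈ B)).filter
        (fun π => (fun a : ↥A => π ↑a) = g)).card = Nat.factorial (n - A.card) := by
    intro g hg
    simp only [ht, Finset.mem_filter, Finset.mem_univ, true_and] at hg
    obtain ⟨hginj, hgB⟩ := hg
    -- construct a permutation π₀ with π₀ a = g a on A
    set π₀ : Equiv.Perm (Fin n) := (Equiv.ofInjective g hginj).extendSubtype with hπ₀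
    have hπ₀A : ∀ (x : Fin n) (hx : x ∈ A), π₀ x = g ⟨x, hx⟩ := by
      intro x hx
      rw [hπ₀, Equiv.extendSubtype_apply_of_mem (Equiv.ofInjective g hginj) x hx,
        Equiv.ofInjective_apply]
    rw [← card_fix n A]
    apply Finset.card_nbij' (i := fun π => π₀⁻¹ * π) (j := fun σ => π₀ * σ)
    · intro π hπ
      simp only [Finset.mem_coe, Finset.mem_filter, Finset.mem_univ, true_and] at hπ ⊢
      intro a ha
      have : π a = g ⟨a, ha⟩ := congrFun hπ.2 ⟨a, ha⟩
      simp [Equiv.Perm.mul_apply, this, ← hπ₀A a ha]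
    · intro σ hσ
      simp only [Finset.mem_coe, Finset.mem_filter, Finset.mem_univ, true_and] at hσ ⊢
      constructor
      · intro a ha
        simp [Equiv.Perm.mul_apply, hσ a ha, hπ₀A a ha, hgB]
      · funext a
        simp [Equiv.Perm.mul_apply, hσ a a.2, hπ₀A a.1 a.2]
    · intro π hπ; simp [mul_assoc]
    · intro σ hσ; simp [← mul_assoc]
  rw [Finset.sum_congr rfl hfib, Finset.sum_const, smul_eq_mul]
  congr 1
  -- card of t
  rw [← Fintype.card_subtype]
  have e2 : {g : (↥A : Type) → Fin n // Function.Injective g ∧ ∀ a, g a ∈ B}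
      ≃ ((↥A : Type) ↪ (↥B : Type)) := by
    refine ⟨fun g => ⟨fun a => ⟨g.1 a, g.2.2 a⟩, fun a b hab => g.2.1 (by
      simpa using congrArg Subtype.val hab)⟩,
      fun f => ⟨fun a => (f a : Fin n), fun a b hab => f.injective (Subtype.ext hab),
        fun a => (f a).2⟩, ?_, ?_⟩
    · intro g; rfl
    · intro f; rfl
  rw [Fintype.card_congr e2, Fintype.card_embedding_eq, Fintype.card_coe, Fintype.card_coe]

lemma card_high (n m : ℕ) (hmn : m ≤ n) :
    (Finset.univ.filter (fun x : Fin n => m ≤ (x : ℕ))).card = n - m := by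
  have key : (Finset.univ.filter (fun x : Fin n => m ≤ (x : ℕ))).card
      = (Finset.univ : Finset (Fin (n - m))).card := by
    apply Finset.card_bij
      (fun (x : Fin n) hx => (⟨(x : ℕ) - m, by simp at hx; omega⟩ : Fin (n - m)))
    · intros; exact Finset.mem_univ _
    · intro a ha b hb h
      simp only [Finset.mem_filter] at ha hb
      have := congrArg Fin.val h
      simp only [] at this
      apply Fin.ext; omega
    · intro b _
      refine ⟨⟨m + (b : ℕ), by have := b.isLt; omega⟩, by simp, ?_⟩
      apply Fin.ext; simp
  rw [key, Finset.card_univ, Fintype.card_fin]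

lemma min_partition (n m : ℕ) (hmn : m ≤ n) (v : Fin n) (A : Finset (Fin n)) (hv : v ∈ A) :
    A.card * (Finset.univ.filter (fun π : Equiv.Perm (Fin n) =>
        (π v : ℕ) < m ∧ ∀ b ∈ A.erase v, (π v : ℕ) < (π b : ℕ))).card
      + (n - m).descFactorial A.card * Nat.factorial (n - A.card) = Nat.factorial n := by
  classical
  set S : Fin n → Finset (Equiv.Perm (Fin n)) := fun a => Finset.univ.filter
    (fun π => (π a : ℕ) < m ∧ ∀ b ∈ A.erase a, (π a : ℕ) < (π b : ℕ)) with hS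
  -- all S a for a ∈ A have the same cardinality
  have hmapsto : ∀ a ∈ A, ∀ c ∈ A, ∀ π ∈ S a, π * Equiv.swap c a ∈ S c := by
    intro a ha c hc π hπ
    simp only [hS, Finset.mem_filter, Finset.mem_univ, true_and, Equiv.Perm.mul_apply] at hπ ⊢
    rw [Equiv.swap_apply_left]
    refine ⟨hπ.1, fun b hb => ?_⟩
    rcases Finset.mem_erase.mp hb with ⟨hbc, hbA⟩
    rcases eq_or_ne b a with rfl | hba
    · rw [Equiv.swap_apply_right]
      exact hπ.2 c (Finset.mem_erase.mpr ⟨fun h => hbc h.symm, hc⟩)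
    · rw [Equiv.swap_apply_of_ne_of_ne hbc hba]
      exact hπ.2 b (Finset.mem_erase.mpr ⟨hba, hbA⟩)
  have hcardeq : ∀ a ∈ A, (S a).card = (S v).card := by
    intro a ha
    apply Finset.card_nbij' (i := fun π => π * Equiv.swap v a) (j := fun π => π * Equiv.swap a v)
    · exact fun π hπ => hmapsto a ha v hv π hπ
    · exact fun π hπ => hmapsto v hv a ha π hπ
    · intro π hπ; dsimp only; rw [Equiv.swap_comm, mul_assoc, Equiv.swap_mul_self, mul_one]
    · intro π hπ; dsimp only; rw [Equiv.swap_comm, mul_assoc, Equiv.swap_mul_self, mul_one]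
  -- the S a partition the set of permutations with min over A less than m
  have hunion : A.biUnion S
      = Finset.univ.filter (fun π : Equiv.Perm (Fin n) => ¬ ∀ b ∈ A, m ≤ (π b : ℕ)) := by
    ext π
    simp only [Finset.mem_biUnion, hS, Finset.mem_filter, Finset.mem_univ, true_and, not_forall,
      not_le]
    constructor
    · rintro ⟨a, ha, h1, -⟩; exact ⟨a, ha, h1⟩
    · rintro ⟨b, hb, hbm⟩
      obtain ⟨a, ha, hmin⟩ := Finset.exists_min_image A (fun x => (π x : ℕ)) ⟨b, hb⟩
      refine ⟨a, ha, lt_of_le_of_lt (hmin b hb) hbm, fun c hc => ?_⟩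
      rcases Finset.mem_erase.mp hc with ⟨hca, hcA⟩
      exact lt_of_le_of_ne (hmin c hcA) (fun h => hca (π.injective (Fin.ext h)).symm)
  have hdisj : ∀ a ∈ A, ∀ c ∈ A, a ≠ c → Disjoint (S a) (S c) := by
    intro a ha c hc hac
    rw [Finset.disjoint_left]
    intro π hπa hπc
    simp only [hS, Finset.mem_filter, Finset.mem_univ, true_and] at hπa hπc
    have h1 := hπa.2 c (Finset.mem_erase.mpr ⟨fun h => hac h.symm, hc⟩)
    have h2 := hπc.2 a (Finset.mem_erase.mpr ⟨hac, ha⟩)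
    omega
  have hcardU : A.card * (S v).card
      = (Finset.univ.filter (fun π : Equiv.Perm (Fin n) => ¬ ∀ b ∈ A, m ≤ (π b : ℕ))).card := by
    rw [← hunion, Finset.card_biUnion hdisj, Finset.sum_congr rfl hcardeq, Finset.sum_const,
      smul_eq_mul]
  -- complement count
  have hcompl : (Finset.univ.filter (fun π : Equiv.Perm (Fin n) => ∀ b ∈ A, m ≤ (π b : ℕ))).card
      = (n - m).descFactorial A.card * Nat.factorial (n - A.card) := by
    have : (Finset.univ.filter (fun π : Equiv.Perm (Fin n) => ∀ b ∈ A, m ≤ (π b : ℕ)))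
        = (Finset.univ.filter (fun π : Equiv.Perm (Fin n) => ∀ b ∈ A,
            π b ∈ Finset.univ.filter (fun x : Fin n => m ≤ (x : ℕ)))) := by
      ext π; simp
    rw [this, card_maps_into, card_high n m hmn]
  have htot := Finset.card_filter_add_card_filter_not
    (s := (Finset.univ : Finset (Equiv.Perm (Fin n))))
    (p := fun π : Equiv.Perm (Fin n) => ∀ b ∈ A, m ≤ (π b : ℕ))
  rw [Finset.card_univ, Fintype.card_perm, Fintype.card_fin] at htot
  have hSv : (Finset.univ.filter (fun π : Equiv.Perm (Fin n) =>
      (π v : ℕ) < m ∧ ∀ b ∈ A.erase v, (π v : ℕ) < (π b : ℕ))) = S v := rfl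
  rw [hSv]
  omega

-- per-step telescoping
lemma step_id (a δ : ℕ) :
    (δ + 1) * a.descFactorial δ + a.descFactorial (δ + 1) = (a + 1).descFactorial (δ + 1) := by
  rw [Nat.descFactorial_succ, Nat.succ_descFactorial_succ]
  rcases le_or_gt δ a with h | h
  · have : a - δ + (δ + 1) = a + 1 := by omega
    ring_nf
    nlinarith [Nat.descFactorial_eq_zero_iff_lt (n := a) (k := δ)]
  · rw [Nat.descFactorial_eq_zero_iff_lt.mpr h]
    ring

-- telescoping sum
lemma telescope (n m δ : ℕ) (hm : m ≤ n) :
    (∑ k ∈ Finset.range m, (δ + 1) * (n - 1 - k).descFactorial δ)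
      + (n - m).descFactorial (δ + 1) = n.descFactorial (δ + 1) := by
  induction m with
  | zero => simp
  | succ m ih =>
    have hm' : m ≤ n := by omega
    rw [Finset.sum_range_succ]
    have h1 : n - m = (n - 1 - m) + 1 := by omega
    have := step_id (n - 1 - m) δ
    have h2 : n - (m + 1) = n - 1 - m := by omega
    rw [h2]
    rw [h1] at ih
    omega

lemma telescope' (n m δ : ℕ) (hm : m ≤ n) (hδ : δ + 1 ≤ n) :
    (δ + 1) * (∑ k ∈ Finset.range m, (n - 1 - k).descFactorial δ * Nat.factorial (n - 1 - δ))
      + (n - m).descFactorial (δ + 1) * Nat.factorial (n - 1 - δ) = Nat.factorial n := by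
  have h := telescope n m δ hm
  have h2 : Nat.factorial (n - (δ+1)) * n.descFactorial (δ+1) = Nat.factorial n :=
    Nat.factorial_mul_descFactorial hδ
  have h3 : n - (δ + 1) = n - 1 - δ := by omega
  rw [h3] at h2
  calc (δ + 1) * (∑ k ∈ Finset.range m, (n - 1 - k).descFactorial δ * Nat.factorial (n - 1 - δ))
        + (n - m).descFactorial (δ + 1) * Nat.factorial (n - 1 - δ)
      = ((∑ k ∈ Finset.range m, (δ + 1) * (n - 1 - k).descFactorial δ)
          + (n - m).descFactorial (δ + 1)) * Nat.factorial (n - 1 - δ) := by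
        conv_rhs => rw [add_mul, Finset.sum_mul]
        rw [Finset.mul_sum]
        congr 1
        exact Finset.sum_congr rfl fun k _ => by ring
    _ = Nat.factorial n := by rw [h, mul_comm, h2]

lemma conv_helper (x y : ℕ) (hxy : x ≤ y) :
    2 * (x * (y - 1)) ≤ (x - 1) * x + y * (y - 1) := by
  rcases Nat.eq_zero_or_pos x with rfl | hx
  · simp
  · have hy : 1 ≤ y := le_trans hx hxy
    zify [hx, hy]
    rcases Nat.lt_or_ge x y with h | h
    · have h1 : (1:ℤ) ≤ (y:ℤ) - x := by omega
      nlinarith [h1]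
    · have : x = y := le_antisymm hxy h
      subst this; ring_nf; omega

-- convexity of g k
lemma g_convex (n k j : ℕ) (hj : j + 2 ≤ n - 1) :
    2 * ((n - 1 - k).descFactorial (j + 1) * Nat.factorial (n - 1 - (j + 1)))
      ≤ (n - 1 - k).descFactorial (j + 2) * Nat.factorial (n - 1 - (j + 2))
        + (n - 1 - k).descFactorial j * Nat.factorial (n - 1 - j) := by
  set a := n - 1 - k with ha
  set b := n - 1 with hb
  have hab : a ≤ b := by omega
  have hjb : j + 2 ≤ b := hj
  set P := a.descFactorial j with hP
  obtain ⟨z, hz⟩ : ∃ z, b - j = z + 2 := ⟨b - j - 2, by omega⟩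
  set Q := Nat.factorial z with hQ
  have e1 : a.descFactorial (j + 1) = (a - j) * P := Nat.descFactorial_succ a j
  have e2 : a.descFactorial (j + 2) = (a - (j + 1)) * ((a - j) * P) := by
    rw [Nat.descFactorial_succ, e1]
  have hb1 : b - (j + 1) = z + 1 := by omega
  have hb2 : b - (j + 2) = z := by omega
  have e3 : Nat.factorial (b - j) = (z + 2) * ((z + 1) * Q) := by
    rw [hz, Nat.factorial_succ, Nat.factorial_succ]
  have e4 : Nat.factorial (b - (j + 1)) = (z + 1) * Q := by
    rw [hb1, Nat.factorial_succ]
  rw [e1, e2, e4, e3, hb2, ← hQ]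
  have key := conv_helper (a - j) (b - j) (by omega)
  rw [hz] at key
  have h5 : a - j - 1 = a - (j + 1) := by omega
  have h6 : z + 2 - 1 = z + 1 := by omega
  rw [h5, h6] at key
  calc 2 * ((a - j) * P * ((z + 1) * Q))
      = (2 * ((a - j) * (z + 1))) * (P * Q) := by ring
    _ ≤ ((a - (j + 1)) * (a - j) + (z + 2) * (z + 1)) * (P * Q) :=
        Nat.mul_le_mul_right _ key
    _ = (a - (j + 1)) * ((a - j) * P) * Q + P * ((z + 2) * ((z + 1) * Q)) := by ring

lemma jensen (N : ℕ) (H : ℕ → ℤ)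
    (hconv : ∀ j, j + 2 ≤ N → 2 * H (j + 1) ≤ H (j + 2) + H j)
    {ι : Type*} [Fintype ι] (f : ι → ℕ) (hf : ∀ v, f v ≤ N) (d : ℕ) (hdN : d ≤ N)
    (hsum : ∑ v, f v = (Fintype.card ι) * d) :
    (Fintype.card ι : ℤ) * H d ≤ ∑ v, H (f v) := by
  classical
  have mono : ∀ j, j + 1 ≤ N → ∀ i, i ≤ j → H (i + 1) - H i ≤ H (j + 1) - H j := by
    intro j
    induction j with
    | zero =>
      intro h i hi
      obtain rfl : i = 0 := Nat.le_zero.mp hi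
      exact le_rfl
    | succ j ih =>
      intro hN i hi
      rcases Nat.lt_or_ge i (j + 1) with h | h
      · have h1 := ih (by omega) i (by omega)
        have h2 := hconv j (by omega)
        have e : j + 1 + 1 = j + 2 := by omega
        rw [e]
        omega
      · have : i = j + 1 := by omega
        subst this; exact le_refl _
  obtain ⟨s, Pup, Pdown⟩ : ∃ s : ℤ, (∀ j, d ≤ j → j + 1 ≤ N → s ≤ H (j + 1) - H j)
      ∧ (∀ j, j < d → H (j + 1) - H j ≤ s) := by
    rcases Nat.lt_or_ge d N with hdN' | hdN'
    · exact ⟨H (d + 1) - H d,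
        fun j hj hjN => mono j hjN d hj,
        fun j hj => mono d (by omega) j (by omega)⟩
    · have hdN2 : d = N := by omega
      rcases Nat.eq_zero_or_pos d with rfl | hd0
      · exact ⟨0, fun j hj hjN => by omega, fun j hj => by omega⟩
      · refine ⟨H d - H (d - 1), fun j hj hjN => by omega, fun j hj => ?_⟩
        have := mono (d - 1) (by omega) j (by omega)
        have hdd : d - 1 + 1 = d := by omega
        rw [hdd] at this
        exact this
  have tangent : ∀ x, x ≤ N → H d + ((x : ℤ) - d) * s ≤ H x := by
    have up : ∀ t, d + t ≤ N → H d + (t : ℤ) * s ≤ H (d + t) := by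
      intro t
      induction t with
      | zero => simp
      | succ t ih =>
        intro ht
        have h1 := ih (by omega)
        have h2 := Pup (d + t) (by omega) (by omega)
        have h3 : ((t + 1 : ℕ) : ℤ) * s = (t : ℤ) * s + s := by push_cast; ring
        have h4 : d + (t + 1) = (d + t) + 1 := by omega
        rw [h4, h3]
        linarith
    have down : ∀ t, t ≤ d → H d ≤ H (d - t) + (t : ℤ) * s := by
      intro t
      induction t with
      | zero => simp
      | succ t ih =>
        intro ht
        have h1 := ih (by omega)
        have h2 := Pdown (d - (t + 1)) (by omega)
        have hdd : d - (t + 1) + 1 = d - t := by omega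
        rw [hdd] at h2
        have h3 : ((t + 1 : ℕ) : ℤ) * s = (t : ℤ) * s + s := by push_cast; ring
        rw [h3]
        linarith
    intro x hx
    rcases le_total d x with h | h
    · have := up (x - d) (by omega)
      have hc : ((x - d : ℕ) : ℤ) = (x : ℤ) - d := by omega
      rw [hc] at this
      have hdx : d + (x - d) = x := by omega
      rwa [hdx] at this
    · have := down (d - x) (by omega)
      have hc : ((d - x : ℕ) : ℤ) = (d : ℤ) - x := by omega
      rw [hc] at this
      have hdx : d - (d - x) = x := by omega
      rw [hdx] at this
      linarith
  have key : ∑ v, (H d + ((f v : ℤ) - d) * s) ≤ ∑ v, H (f v) :=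
    Finset.sum_le_sum fun v _ => tangent (f v) (hf v)
  have expand : ∑ v, (H d + ((f v : ℤ) - d) * s) = (Fintype.card ι : ℤ) * H d := by
    rw [Finset.sum_add_distrib, Finset.sum_const, Finset.card_univ, nsmul_eq_mul]
    have : ∑ v, ((f v : ℤ) - d) * s = ((∑ v, (f v : ℤ)) - (Fintype.card ι : ℤ) * d) * s := by
      simp only [sub_mul, Finset.sum_mul, Finset.sum_sub_distrib, Finset.sum_const,
        Finset.card_univ, nsmul_eq_mul]
      ring
    rw [this]
    have hsum' : (∑ v, (f v : ℤ)) = (Fintype.card ι : ℤ) * d := by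
      push_cast [← Nat.cast_sum]
      exact_mod_cast congrArg (Nat.cast : ℕ → ℤ) hsum
    rw [hsum', sub_self, zero_mul, add_zero]
  linarith

lemma prod_eq (n d m : ℕ) (hm : m ≤ n) (hd : d + 1 ≤ n) :
    ∏ i ∈ Finset.Icc 1 m, (((n:ℝ) - d - i) / ((n:ℝ) + 1 - i))
      = ((n - m).descFactorial (d+1) * Nat.factorial (n - 1 - d) : ℝ)
        / (Nat.factorial n : ℝ) := by
  have hIcc : Finset.Icc 1 m = Finset.Ico 1 (m + 1) := by rw [Finset.Ico_add_one_right_eq_Icc]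
  rw [hIcc, Finset.prod_Ico_eq_prod_range]
  simp only [Nat.add_sub_cancel]
  rw [Finset.prod_div_distrib]
  simp only [Nat.cast_add, Nat.cast_one]
  have hden : ∏ j ∈ Finset.range m, ((n:ℝ) + 1 - (1 + j)) = (n.descFactorial m : ℝ) := by
    rw [Nat.descFactorial_eq_prod_range, Nat.cast_prod]
    refine Finset.prod_congr rfl fun j hj => ?_
    rw [Finset.mem_range] at hj
    rw [Nat.cast_sub (by omega)]
    push_cast
    ring
  rw [hden]
  rcases le_or_gt (m + d + 1) n with hcase | hcase
  · -- non-degenerate case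
    have hnum : ∏ j ∈ Finset.range m, ((n:ℝ) - d - (1 + j))
        = ((n - d - 1).descFactorial m : ℝ) := by
      rw [Nat.descFactorial_eq_prod_range, Nat.cast_prod]
      refine Finset.prod_congr rfl fun j hj => ?_
      rw [Finset.mem_range] at hj
      rw [Nat.cast_sub (by omega), Nat.cast_sub (by omega), Nat.cast_sub (by omega)]
      push_cast
      ring
    rw [hnum]
    have hdf : 0 < (n.descFactorial m : ℝ) := by
      have : n.descFactorial m ≠ 0 := fun h => by
        have := Nat.descFactorial_eq_zero_iff_lt.mp h; omega
      exact_mod_cast Nat.pos_of_ne_zero this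
    rw [div_eq_div_iff hdf.ne' (by positivity)]
    rw [← Nat.cast_mul, ← Nat.cast_mul, ← Nat.cast_mul]
    congr 1
    -- ℕ identity
    have A : Nat.factorial (n - m) * n.descFactorial m = Nat.factorial n :=
      Nat.factorial_mul_descFactorial hm
    have B : Nat.factorial (n - d - 1 - m) * (n - d - 1).descFactorial m
        = Nat.factorial (n - d - 1) := by
      have := Nat.factorial_mul_descFactorial (n := n - d - 1) (k := m) (by omega)
      rwa [show n - d - 1 - m = n - d - 1 - m from rfl] at this
    have C : Nat.factorial (n - m - (d + 1)) * (n - m).descFactorial (d + 1)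
        = Nat.factorial (n - m) := Nat.factorial_mul_descFactorial (by omega)
    have hE : n - m - (d + 1) = n - d - 1 - m := by omega
    rw [hE] at C
    apply Nat.eq_of_mul_eq_mul_left (Nat.factorial_pos (n - d - 1 - m))
    have h1d : n - 1 - d = n - d - 1 := by omega
    calc Nat.factorial (n - d - 1 - m) * ((n - d - 1).descFactorial m * Nat.factorial n)
        = Nat.factorial (n - d - 1) * Nat.factorial n := by rw [← B]; ring
      _ = Nat.factorial (n - d - 1 - m)
          * ((n - m).descFactorial (d + 1) * Nat.factorial (n - 1 - d) * n.descFactorial m) := by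
          rw [h1d, ← A, ← C]; ring
  · -- degenerate case: a zero factor
    have hzero : ∏ j ∈ Finset.range m, ((n:ℝ) - d - (1 + j)) = 0 := by
      apply Finset.prod_eq_zero (i := n - d - 1) (Finset.mem_range.mpr (by omega))
      have : ((1 : ℝ) + (n - d - 1 : ℕ)) = (n : ℝ) - d := by
        rw [Nat.cast_sub (by omega), Nat.cast_sub (by omega)]
        push_cast; ring
      rw [this]; ring
    rw [hzero]
    have : (n - m).descFactorial (d + 1) = 0 :=
      Nat.descFactorial_eq_zero_iff_lt.mpr (by omega)
    rw [this]
    simp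

/-- Worst-case bound on the conflict ratio: for a graph with `n` vertices and average
degree `d` with `(d+1) ∣ n`,
`r̄(m) = 1 − ES_m(G)/m ≤ 1 − (n/(m(d+1)))·(1 − ∏_{i=1}^m (n−d−i)/(n+1−i))`. -/
theorem stmt11 (n d m : ℕ) (hm1 : 1 ≤ m) (hmn : m ≤ n) (hdvd : (d + 1) ∣ n)
    (G : SimpleGraph (Fin n)) [DecidableRel G.Adj]
    (hd : ∑ v : Fin n, G.degree v = n * d) :
    1 - ((∑ π : Equiv.Perm (Fin n), ((Finset.univ.filter (fun v : Fin n =>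
          (π v : ℕ) < m ∧ ∀ u ∈ G.neighborFinset v, (π v : ℕ) < (π u : ℕ))).card : ℝ))
        / (Nat.factorial n : ℝ)) / m
    ≤ 1 - ((n : ℝ) / (m * ((d : ℝ) + 1)))
        * (1 - ∏ i ∈ Finset.Icc 1 m, (((n:ℝ) - d - i) / ((n:ℝ) + 1 - i))) := by
  classical
  have hn : 1 ≤ n := le_trans hm1 hmn
  -- double counting: swap the sums
  have hswap : ∑ π : Equiv.Perm (Fin n), (Finset.univ.filter (fun v : Fin n =>
        (π v : ℕ) < m ∧ ∀ u ∈ G.neighborFinset v, (π v : ℕ) < (π u : ℕ))).card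
      = ∑ v : Fin n, (Finset.univ.filter (fun π : Equiv.Perm (Fin n) =>
        (π v : ℕ) < m ∧ ∀ u ∈ G.neighborFinset v, (π v : ℕ) < (π u : ℕ))).card := by
    simp only [Finset.card_filter]
    rw [Finset.sum_comm]
  -- degrees are at most n - 1
  have hdeg : ∀ v : Fin n, G.degree v ≤ n - 1 := by
    intro v
    have h1 : G.neighborFinset v ⊆ Finset.univ.erase v := by
      intro u hu
      refine Finset.mem_erase.mpr ⟨?_, Finset.mem_univ u⟩
      intro h
      exact G.loopless.irrefl v (by simpa [h] using (SimpleGraph.mem_neighborFinset _ _ _).mp hu)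
    have := Finset.card_le_card h1
    rwa [Finset.card_erase_of_mem (Finset.mem_univ v), Finset.card_univ, Fintype.card_fin]
      at this
  have hdn : d ≤ n - 1 := by
    have h1 : n * d ≤ n * (n - 1) := by
      rw [← hd]
      calc ∑ v : Fin n, G.degree v ≤ ∑ _v : Fin n, (n - 1) :=
            Finset.sum_le_sum fun v _ => hdeg v
        _ = n * (n - 1) := by rw [Finset.sum_const, Finset.card_univ, Fintype.card_fin,
            smul_eq_mul]
    exact Nat.le_of_mul_le_mul_left h1 (by omega)
  -- the per-vertex count
  set h : ℕ → ℕ := fun δ => ∑ k ∈ Finset.range m,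
    (n - 1 - k).descFactorial δ * Nat.factorial (n - 1 - δ) with hh
  have hvertex : ∀ v : Fin n, (Finset.univ.filter (fun π : Equiv.Perm (Fin n) =>
      (π v : ℕ) < m ∧ ∀ u ∈ G.neighborFinset v, (π v : ℕ) < (π u : ℕ))).card
      = h (G.degree v) := by
    intro v
    have hvnb : v ∉ G.neighborFinset v := by
      simp [SimpleGraph.mem_neighborFinset]
    have hAcard : (insert v (G.neighborFinset v)).card = G.degree v + 1 := by
      rw [Finset.card_insert_of_notMem hvnb]; rfl
    have hmp := min_partition n m hmn v (insert v (G.neighborFinset v))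
      (Finset.mem_insert_self v _)
    rw [Finset.erase_insert hvnb, hAcard] at hmp
    have hδ : G.degree v + 1 ≤ n := by have := hdeg v; omega
    have htel := telescope' n m (G.degree v) hmn hδ
    have hsub : n - (G.degree v + 1) = n - 1 - G.degree v := by omega
    rw [hsub] at hmp
    apply Nat.eq_of_mul_eq_mul_left (show 0 < G.degree v + 1 by omega)
    have hgoal : (G.degree v + 1) * h (G.degree v) = (G.degree v + 1) * ∑ k ∈ Finset.range m,
        (n - 1 - k).descFactorial (G.degree v) * Nat.factorial (n - 1 - G.degree v) := rfl
    rw [hgoal]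
    omega
  -- Jensen / convexity step
  have hjensen : n * h d ≤ ∑ v : Fin n, h (G.degree v) := by
    have hconv : ∀ j, j + 2 ≤ n - 1 → 2 * ((h (j + 1) : ℤ)) ≤ (h (j + 2) : ℤ) + (h j : ℤ) := by
      intro j hj
      have : 2 * h (j + 1) ≤ h (j + 2) + h j := by
        rw [hh]
        simp only [Finset.mul_sum, ← Finset.sum_add_distrib]
        exact Finset.sum_le_sum fun k _ => g_convex n k j hj
      exact_mod_cast this
    have := jensen (n - 1) (fun δ => (h δ : ℤ)) hconv (fun v => G.degree v) hdeg d hdn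
      (by rw [Fintype.card_fin]; exact hd)
    rw [Fintype.card_fin] at this
    have h3 : ((n : ℤ)) * ((h d : ℕ) : ℤ) ≤ ∑ v : Fin n, ((h (G.degree v) : ℕ) : ℤ) := this
    exact_mod_cast h3
  -- telescoping at δ = d
  have htd := telescope' n m d hmn (by omega)
  set D : ℕ := (n - m).descFactorial (d + 1) * Nat.factorial (n - 1 - d) with hD
  -- the product identity
  have hprod : ∏ i ∈ Finset.Icc 1 m, (((n:ℝ) - d - i) / ((n:ℝ) + 1 - i))
      = (D : ℝ) / (Nat.factorial n : ℝ) := by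
    rw [hD]; push_cast [prod_eq n d m hmn (by omega)]; ring
  -- final assembly
  apply sub_le_sub_left
  rw [hprod]
  have hm0 : (0:ℝ) < m := by exact_mod_cast hm1
  have hd0 : (0:ℝ) < (d:ℝ) + 1 := by positivity
  have hf0 : (0:ℝ) < (Nat.factorial n : ℝ) := by exact_mod_cast Nat.factorial_pos n
  have htdR : ((d:ℝ) + 1) * (h d : ℝ) + (D : ℝ) = (Nat.factorial n : ℝ) := by
    exact_mod_cast congrArg (Nat.cast : ℕ → ℝ) htd
  have e1 : 1 - (D : ℝ) / (Nat.factorial n : ℝ)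
      = ((d:ℝ) + 1) * (h d : ℝ) / (Nat.factorial n : ℝ) := by
    field_simp
    linarith
  rw [e1]
  have e2 : ((n:ℝ) / (m * ((d:ℝ) + 1))) * (((d:ℝ) + 1) * (h d : ℝ) / (Nat.factorial n : ℝ))
      = ((n:ℝ) * (h d : ℝ)) / (m * (Nat.factorial n : ℝ)) := by
    field_simp
  rw [e2]
  have hT : ∑ π : Equiv.Perm (Fin n), ((Finset.univ.filter (fun v : Fin n =>
        (π v : ℕ) < m ∧ ∀ u ∈ G.neighborFinset v, (π v : ℕ) < (π u : ℕ))).card : ℝ)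
      = ((∑ v : Fin n, h (G.degree v) : ℕ) : ℝ) := by
    rw [← Nat.cast_sum]
    exact congrArg (Nat.cast : ℕ → ℝ)
      (hswap.trans (Finset.sum_congr rfl fun v _ => hvertex v))
  rw [hT, div_div, mul_comm ((Nat.factorial n : ℝ)) (m : ℝ)]
  gcongr
  exact_mod_cast hjensen
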